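/- arXiv:1703.02739 — 2 statements merged into one kernel-verified Lean document; each statement's English description precedes it below -/
import Mathlib

section
/- Let A_L be a real n×n matrix with I − A_L invertible, A_H a real n̄×n̄ matrix with I − A_H invertible, B_L an n×m real matrix, B_H an n̄×m real matrix, and β an n̄×n real matrix, and assume the DC-gain matching condition β (I − A_L)⁻¹ B_L = (I − A_H)⁻¹ B_H. Then for every N ≥ 0, κ(N) := ‖Σ_{j=0}^{N−1} A_H^j B_H − β Σ_{j=0}^{N−1} A_L^j B_L‖ ≤ ‖A_H^N‖ · ‖(I − A_H)⁻¹ B_H‖ + ‖A_L^N‖ · ‖β‖ · ‖(I − A_L)⁻¹ B_L‖. -/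
open Matrix Finset Filter Topology

/-- Operator norm of a real matrix, induced by the Euclidean norms on domain and codomain. -/
noncomputable def opN {α β : Type*} [Fintype α] [Fintype β] [DecidableEq β]
    (A : Matrix α β ℝ) : ℝ :=
  ‖LinearMap.toContinuousLinearMap (Matrix.toEuclideanLin A)‖

/-- A real matrix acting on Euclidean vectors. -/
noncomputable def appE {α β : Type*} [Fintype α] [Fintype β] [DecidableEq β]
    (A : Matrix α β ℝ) (v : EuclideanSpace ℝ β) : EuclideanSpace ℝ α :=
  Matrix.toEuclideanLin A v

lemma opN_nonneg {α β : Type*} [Fintype α] [Fintype β] [DecidableEq β]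
    (A : Matrix α β ℝ) : 0 ≤ opN A := norm_nonneg _

lemma opN_mul_le {α β γ : Type*} [Fintype α] [Fintype β] [Fintype γ] [DecidableEq β] [DecidableEq γ]
    (A : Matrix α β ℝ) (B : Matrix β γ ℝ) : opN (A * B) ≤ opN A * opN B := by
  have h : Matrix.toEuclideanLin (A * B) =
      (Matrix.toEuclideanLin A).comp (Matrix.toEuclideanLin B) := by
    rw [Matrix.toEuclideanLin_eq_toLin, Matrix.toEuclideanLin_eq_toLin,
      Matrix.toEuclideanLin_eq_toLin,
      Matrix.toLin_mul (PiLp.basisFun 2 ℝ γ) (PiLp.basisFun 2 ℝ β) (PiLp.basisFun 2 ℝ α)]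
  have h2 : LinearMap.toContinuousLinearMap (Matrix.toEuclideanLin (A * B)) =
      (LinearMap.toContinuousLinearMap (Matrix.toEuclideanLin A)).comp
        (LinearMap.toContinuousLinearMap (Matrix.toEuclideanLin B)) := by
    ext v; simp [h]
  unfold opN
  rw [h2]
  exact ContinuousLinearMap.opNorm_comp_le _ _

lemma opN_sub_le {α β : Type*} [Fintype α] [Fintype β] [DecidableEq β]
    (A B : Matrix α β ℝ) : opN (A - B) ≤ opN A + opN B := by
  have h : LinearMap.toContinuousLinearMap (Matrix.toEuclideanLin (A - B)) =
      LinearMap.toContinuousLinearMap (Matrix.toEuclideanLin A) -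
      LinearMap.toContinuousLinearMap (Matrix.toEuclideanLin B) := by
    ext v; simp
  simpa [opN, h] using norm_sub_le _ _

lemma geom_sum_eq_matrix {k m : ℕ} (A : Matrix (Fin k) (Fin k) ℝ) (B : Matrix (Fin k) (Fin m) ℝ)
    (h : IsUnit (1 - A)) (N : ℕ) :
    (∑ j ∈ Finset.range N, A ^ j * B) = (1 - A)⁻¹ * B - A ^ N * ((1 - A)⁻¹ * B) := by
  have hd : IsUnit (1 - A).det := (Matrix.isUnit_iff_isUnit_det _).mp h
  have h1 : (∑ j ∈ Finset.range N, A ^ j) * (1 - A) = 1 - A ^ N := by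
    have := geom_sum_mul A N
    have : (∑ j ∈ Finset.range N, A ^ j) * (1 - A)
        = -((∑ j ∈ Finset.range N, A ^ j) * (A - 1)) := by
      rw [← mul_neg, neg_sub]
    rw [this, geom_sum_mul, neg_sub]
  have h2 : (∑ j ∈ Finset.range N, A ^ j) = (1 - A ^ N) * (1 - A)⁻¹ := by
    rw [← h1, mul_assoc, Matrix.mul_nonsing_inv _ hd, mul_one]
  rw [← Matrix.sum_mul, h2, Matrix.sub_mul, Matrix.one_mul, Matrix.sub_mul, Matrix.mul_assoc]

/-- Bound on `κ(N)` (equation (21)) under the DC-gain matching condition. -/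
theorem kappa_bound {n nb m : ℕ} (AL : Matrix (Fin n) (Fin n) ℝ)
    (AH : Matrix (Fin nb) (Fin nb) ℝ) (BL : Matrix (Fin n) (Fin m) ℝ)
    (BH : Matrix (Fin nb) (Fin m) ℝ) (β : Matrix (Fin nb) (Fin n) ℝ)
    (hALinv : IsUnit (1 - AL)) (hAHinv : IsUnit (1 - AH))
    (hmatch : β * ((1 - AL)⁻¹ * BL) = (1 - AH)⁻¹ * BH) :
    ∀ N : ℕ,
      opN ((∑ j ∈ Finset.range N, AH ^ j * BH) - β * ∑ j ∈ Finset.range N, AL ^ j * BL)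
        ≤ opN (AH ^ N) * opN ((1 - AH)⁻¹ * BH) +
          opN (AL ^ N) * opN β * opN ((1 - AL)⁻¹ * BL) := by
  intro N
  set X := (1 - AH)⁻¹ * BH with hX
  set Y := (1 - AL)⁻¹ * BL with hY
  have key : (∑ j ∈ Finset.range N, AH ^ j * BH) - β * ∑ j ∈ Finset.range N, AL ^ j * BL
      = β * (AL ^ N * Y) - AH ^ N * X := by
    rw [geom_sum_eq_matrix AH BH hAHinv N, geom_sum_eq_matrix AL BL hALinv N,
      ← hX, ← hY, Matrix.mul_sub, hmatch]
    abel
  rw [key]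
  calc opN (β * (AL ^ N * Y) - AH ^ N * X)
      ≤ opN (β * (AL ^ N * Y)) + opN (AH ^ N * X) := opN_sub_le _ _
    _ ≤ opN β * (opN (AL ^ N) * opN Y) + opN (AH ^ N) * opN X := by
        gcongr
        · exact (opN_mul_le _ _).trans (by gcongr; exacts [opN_nonneg _, opN_mul_le _ _])
        · exact opN_mul_le _ _
    _ = opN (AH ^ N) * opN X + opN (AL ^ N) * opN β * opN Y := by ring
end

section
/- (Theorem 1.(iv), core convergence.) Let F be a real n×n matrix admitting C ≥ 0 and γ ∈ [0,1) with ‖F^k‖ ≤ C γ^k for all k ≥ 0, and let ρ ≥ 0. Define the set S = { Σ_{h=0}^{∞} F^h u_h : u : ℕ → ℝⁿ with ‖u_h‖ ≤ ρ for all h } ⊆ ℝⁿ (the series converges absolutely by the geometric bound). Let x : ℕ → ℝⁿ satisfy x(k+1) = F x(k) + v(k) + w(k), where v(k) → 0 as k → ∞ and ‖w(k)‖ ≤ ρ for all k. Then the Euclidean distance from x(k) to the set S tends to 0 as k → ∞. -/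
open Matrix Finset Filter Topology

lemma appE_norm_le {α β : Type*} [Fintype α] [Fintype β] [DecidableEq β]
    (A : Matrix α β ℝ) (v : EuclideanSpace ℝ β) : ‖appE A v‖ ≤ opN A * ‖v‖ := by
  have := (LinearMap.toContinuousLinearMap (Matrix.toEuclideanLin A)).le_opNorm v
  simpa [appE, opN] using this

lemma appE_mul {n : ℕ} (A B : Matrix (Fin n) (Fin n) ℝ) (v : EuclideanSpace ℝ (Fin n)) :
    appE (A * B) v = appE A (appE B v) := by
  simp [appE, Matrix.toEuclideanLin_apply, Matrix.mulVec_mulVec]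

lemma appE_one {n : ℕ} (v : EuclideanSpace ℝ (Fin n)) : appE (1 : Matrix (Fin n) (Fin n) ℝ) v = v := by
  simp [appE, Matrix.toEuclideanLin_apply, Matrix.one_mulVec]

lemma appE_add {α β : Type*} [Fintype α] [Fintype β] [DecidableEq β]
    (A : Matrix α β ℝ) (u v : EuclideanSpace ℝ β) : appE A (u + v) = appE A u + appE A v :=
  map_add (Matrix.toEuclideanLin A) u v

lemma appE_zero {α β : Type*} [Fintype α] [Fintype β] [DecidableEq β]
    (A : Matrix α β ℝ) : appE A (0 : EuclideanSpace ℝ β) = 0 :=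
  map_zero (Matrix.toEuclideanLin A)

lemma appE_sum {α β : Type*} [Fintype α] [Fintype β] [DecidableEq β]
    (A : Matrix α β ℝ) (s : Finset ℕ) (f : ℕ → EuclideanSpace ℝ β) :
    appE A (∑ j ∈ s, f j) = ∑ j ∈ s, appE A (f j) :=
  map_sum (Matrix.toEuclideanLin A) f s

/-- Discrete convolution with a geometric kernel of a vanishing nonnegative sequence tends to 0. -/
lemma conv_tendsto (γ : ℝ) (hγ0 : 0 ≤ γ) (hγ1 : γ < 1) (a : ℕ → ℝ)
    (ha0 : ∀ j, 0 ≤ a j) (ha : Tendsto a atTop (nhds 0)) :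
    Tendsto (fun k => ∑ j ∈ Finset.range k, γ ^ (k - 1 - j) * a j) atTop (nhds 0) := by
  rw [Metric.tendsto_atTop]
  intro ε hε
  have h1γ : 0 < 1 - γ := by linarith
  set δ : ℝ := ε * (1 - γ) / 2 with hδdef
  have hδ : 0 < δ := by positivity
  obtain ⟨N₁, hN₁⟩ : ∃ N₁, ∀ j ≥ N₁, a j < δ := by
    have := ha.eventually (gt_mem_nhds hδ)
    exact eventually_atTop.1 this
  set T : ℝ := ∑ j ∈ Finset.range N₁, a j with hTdef
  have hT : 0 ≤ T := Finset.sum_nonneg fun j _ => ha0 j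
  have h2 : Tendsto (fun k : ℕ => γ ^ (k - N₁) * T) atTop (nhds 0) := by
    have h3 : Tendsto (fun k : ℕ => γ ^ (k - N₁)) atTop (nhds 0) :=
      (tendsto_pow_atTop_nhds_zero_of_lt_one hγ0 hγ1).comp (tendsto_sub_atTop_nat N₁)
    simpa using h3.mul_const T
  obtain ⟨N₂, hN₂⟩ : ∃ N₂, ∀ k ≥ N₂, γ ^ (k - N₁) * T < ε / 2 :=
    eventually_atTop.1 (h2.eventually (gt_mem_nhds (by positivity)))
  refine ⟨max N₁ N₂, fun k hk => ?_⟩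
  have hk1 : N₁ ≤ k := le_trans (le_max_left _ _) hk
  have hk2 : N₂ ≤ k := le_trans (le_max_right _ _) hk
  have hnn : 0 ≤ ∑ j ∈ Finset.range k, γ ^ (k - 1 - j) * a j :=
    Finset.sum_nonneg fun j _ => mul_nonneg (pow_nonneg hγ0 _) (ha0 j)
  rw [Real.dist_eq, sub_zero, abs_of_nonneg hnn]
  have hsplit : ∑ j ∈ Finset.range k, γ ^ (k - 1 - j) * a j
      = (∑ j ∈ Finset.range N₁, γ ^ (k - 1 - j) * a j)
        + ∑ j ∈ Finset.Ico N₁ k, γ ^ (k - 1 - j) * a j := by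
    rw [Finset.range_eq_Ico, Finset.range_eq_Ico]
    exact (Finset.sum_Ico_consecutive (fun j => γ ^ (k - 1 - j) * a j) (Nat.zero_le N₁) hk1).symm
  have hb1 : ∑ j ∈ Finset.range N₁, γ ^ (k - 1 - j) * a j ≤ γ ^ (k - N₁) * T := by
    rw [hTdef, Finset.mul_sum]
    refine Finset.sum_le_sum fun j hj => ?_
    have hjN : j < N₁ := Finset.mem_range.1 hj
    exact mul_le_mul_of_nonneg_right
      (pow_le_pow_of_le_one hγ0 hγ1.le (by omega)) (ha0 j)
  have hb2 : ∑ j ∈ Finset.Ico N₁ k, γ ^ (k - 1 - j) * a j ≤ ε / 2 := by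
    have s1 : ∑ j ∈ Finset.Ico N₁ k, γ ^ (k - 1 - j) * a j
        ≤ ∑ j ∈ Finset.Ico N₁ k, γ ^ (k - 1 - j) * δ := by
      refine Finset.sum_le_sum fun j hj => ?_
      exact mul_le_mul_of_nonneg_left (le_of_lt (hN₁ j (Finset.mem_Ico.1 hj).1))
        (pow_nonneg hγ0 _)
    have s2 : ∑ j ∈ Finset.Ico N₁ k, γ ^ (k - 1 - j) * δ
        ≤ ∑ j ∈ Finset.range k, γ ^ (k - 1 - j) * δ := by
      refine Finset.sum_le_sum_of_subset_of_nonneg ?_ fun j _ _ =>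
        mul_nonneg (pow_nonneg hγ0 _) hδ.le
      intro j hj
      rw [Finset.mem_range]
      exact (Finset.mem_Ico.1 hj).2
    have s3 : ∑ j ∈ Finset.range k, γ ^ (k - 1 - j) * δ = (∑ j ∈ Finset.range k, γ ^ j) * δ := by
      rw [← Finset.sum_mul]
      congr 1
      exact Finset.sum_range_reflect (fun j => γ ^ j) k
    have s4 : ∑ j ∈ Finset.range k, γ ^ j ≤ (1 - γ)⁻¹ := by
      have := Summable.sum_le_tsum (Finset.range k) (fun j _ => pow_nonneg hγ0 j)
        (summable_geometric_of_lt_one hγ0 hγ1)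
      rwa [tsum_geometric_of_lt_one hγ0 hγ1] at this
    have s5 : (∑ j ∈ Finset.range k, γ ^ j) * δ ≤ (1 - γ)⁻¹ * δ :=
      mul_le_mul_of_nonneg_right s4 hδ.le
    have s6 : (1 - γ)⁻¹ * δ = ε / 2 := by
      rw [hδdef]; field_simp
    calc ∑ j ∈ Finset.Ico N₁ k, γ ^ (k - 1 - j) * a j
        ≤ ∑ j ∈ Finset.range k, γ ^ (k - 1 - j) * δ := le_trans s1 s2
      _ = (∑ j ∈ Finset.range k, γ ^ j) * δ := s3
      _ ≤ (1 - γ)⁻¹ * δ := s5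
      _ = ε / 2 := s6
  have := hN₂ k hk2
  linarith [hsplit, hb1, hb2]

/-- Theorem 1.(iv), core convergence: the state of `x⁺ = F x + v + w`, with `v → 0` and
`‖w‖ ≤ ρ`, converges to the infinite Minkowski sum `S = ⊕_{h=0}^{∞} F^h B_ρ(0)`. -/
theorem robust_convergence_to_set {n : ℕ} (F : Matrix (Fin n) (Fin n) ℝ)
    (C γ : ℝ) (hC : 0 ≤ C) (hγ0 : 0 ≤ γ) (hγ1 : γ < 1)
    (hF : ∀ k, opN (F ^ k) ≤ C * γ ^ k)
    (ρ : ℝ) (hρ : 0 ≤ ρ)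
    (S : Set (EuclideanSpace ℝ (Fin n)))
    (hS : S = {y | ∃ u : ℕ → EuclideanSpace ℝ (Fin n),
      (∀ h, ‖u h‖ ≤ ρ) ∧ HasSum (fun h => appE (F ^ h) (u h)) y})
    (x v w : ℕ → EuclideanSpace ℝ (Fin n))
    (hx : ∀ k, x (k + 1) = appE F (x k) + v k + w k)
    (hv : Filter.Tendsto v Filter.atTop (nhds 0))
    (hw : ∀ k, ‖w k‖ ≤ ρ) :
    Filter.Tendsto (fun k => Metric.infDist (x k) S) Filter.atTop (nhds 0) := by
  -- closed-form solution
  have key : ∀ k, x k = appE (F ^ k) (x 0)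
      + (∑ j ∈ Finset.range k, appE (F ^ (k - 1 - j)) (v j))
      + (∑ j ∈ Finset.range k, appE (F ^ (k - 1 - j)) (w j)) := by
    intro k
    induction k with
    | zero => simp [appE_one]
    | succ k ih =>
      rw [hx k, ih]
      rw [appE_add, appE_add, appE_sum, appE_sum]
      have hpow : ∀ z : EuclideanSpace ℝ (Fin n), ∀ m : ℕ,
          appE F (appE (F ^ m) z) = appE (F ^ (m + 1)) z := by
        intro z m
        rw [← appE_mul, ← pow_succ']
      have e1 : appE F (appE (F ^ k) (x 0)) = appE (F ^ (k + 1)) (x 0) := hpow _ k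
      have e2 : ∀ (f : ℕ → EuclideanSpace ℝ (Fin n)),
          (∑ j ∈ Finset.range k, appE F (appE (F ^ (k - 1 - j)) (f j))) + f k
          = ∑ j ∈ Finset.range (k + 1), appE (F ^ (k + 1 - 1 - j)) (f j) := by
        intro f
        rw [Finset.sum_range_succ]
        congr 1
        · refine Finset.sum_congr rfl fun j hj => ?_
          have hjk : j < k := Finset.mem_range.1 hj
          have he : k + 1 - 1 - j = (k - 1 - j) + 1 := by omega
          rw [he, hpow]
        · have : k + 1 - 1 - k = 0 := by omega
          rw [this, pow_zero, appE_one]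
      rw [e1, ← e2 v, ← e2 w]
      abel
  -- the candidate point in S and the distance bound
  set b : ℕ → ℝ := fun k => C * γ ^ k * ‖x 0‖
      + C * ∑ j ∈ Finset.range k, γ ^ (k - 1 - j) * ‖v j‖ with hbdef
  have hle : ∀ k, Metric.infDist (x k) S ≤ b k := by
    intro k
    classical
    set uk : ℕ → EuclideanSpace ℝ (Fin n) := fun h => if h < k then w (k - 1 - h) else 0
      with hukdef
    set s : EuclideanSpace ℝ (Fin n) := ∑ h ∈ Finset.range k, appE (F ^ h) (uk h) with hsdef
    have hmem : s ∈ S := by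
      rw [hS]
      refine ⟨uk, fun h => ?_, ?_⟩
      · by_cases hhk : h < k
        · simpa [hukdef, hhk] using hw (k - 1 - h)
        · simp [hukdef, hhk, hρ]
      · refine hasSum_sum_of_ne_finset_zero fun h hh => ?_
        have : ¬ h < k := by simpa using hh
        simp [hukdef, this, appE_zero]
    have hsW : s = ∑ j ∈ Finset.range k, appE (F ^ (k - 1 - j)) (w j) := by
      rw [hsdef]
      have e : ∀ h ∈ Finset.range k, appE (F ^ h) (uk h)
          = appE (F ^ h) (w (k - 1 - h)) := by
        intro h hh
        have : h < k := Finset.mem_range.1 hh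
        simp [hukdef, this]
      rw [Finset.sum_congr rfl e]
      have := Finset.sum_range_reflect (fun h => appE (F ^ h) (w (k - 1 - h))) k
      rw [← this]
      refine (Finset.sum_congr rfl fun j hj => ?_).symm
      have hjk : j < k := Finset.mem_range.1 hj
      have h1 : k - 1 - (k - 1 - j) = j := by omega
      rw [h1]
    have hdiff : x k - s = appE (F ^ k) (x 0)
        + ∑ j ∈ Finset.range k, appE (F ^ (k - 1 - j)) (v j) := by
      rw [key k, hsW]; abel
    have hdist : Metric.infDist (x k) S ≤ ‖x k - s‖ := by
      simpa [dist_eq_norm] using Metric.infDist_le_dist_of_mem hmem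
    have hnorm : ‖x k - s‖ ≤ C * γ ^ k * ‖x 0‖
        + C * ∑ j ∈ Finset.range k, γ ^ (k - 1 - j) * ‖v j‖ := by
      rw [hdiff]
      refine le_trans (norm_add_le _ _) ?_
      have t1 : ‖appE (F ^ k) (x 0)‖ ≤ C * γ ^ k * ‖x 0‖ :=
        le_trans (appE_norm_le _ _) (mul_le_mul_of_nonneg_right (hF k) (norm_nonneg _))
      have t2 : ‖∑ j ∈ Finset.range k, appE (F ^ (k - 1 - j)) (v j)‖
          ≤ C * ∑ j ∈ Finset.range k, γ ^ (k - 1 - j) * ‖v j‖ := by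
        refine le_trans (norm_sum_le _ _) ?_
        rw [Finset.mul_sum]
        refine Finset.sum_le_sum fun j _ => ?_
        refine le_trans (appE_norm_le _ _) ?_
        rw [← mul_assoc]
        exact mul_le_mul_of_nonneg_right (hF _) (norm_nonneg _)
      linarith
    exact le_trans hdist hnorm
  -- b → 0
  have hb : Tendsto b atTop (nhds 0) := by
    have h1 : Tendsto (fun k : ℕ => C * γ ^ k * ‖x 0‖) atTop (nhds 0) := by
      have := ((tendsto_pow_atTop_nhds_zero_of_lt_one hγ0 hγ1).const_mul C).mul_const ‖x 0‖
      simpa using this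
    have h2 : Tendsto (fun k => C * ∑ j ∈ Finset.range k, γ ^ (k - 1 - j) * ‖v j‖)
        atTop (nhds 0) := by
      have hvn : Tendsto (fun j => ‖v j‖) atTop (nhds 0) := by
        simpa using hv.norm
      have := (conv_tendsto γ hγ0 hγ1 (fun j => ‖v j‖) (fun j => norm_nonneg _) hvn).const_mul C
      simpa using this
    simpa using h1.add h2
  exact squeeze_zero (fun k => Metric.infDist_nonneg) hle hb
end
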